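/- Let V_1,...,V_n be isometries with orthogonal ranges on a Hilbert space K, W : E → K a bounded operator, and define F(z) := W*(I + ∑ z_i V_i*)(I - ∑ z_i V_i*)^{-1} W for z ∈ B_n. Then for any finite set of points w_1,...,w_m ∈ B_n and vectors h_1,...,h_m ∈ E, the matrix [(F(w_i) + F(w_j)*)/(1 - ⟨w_i, w_j⟩)]_{i,j} is positive semidefinite, i.e., ∑_{i,j} ⟨(F(w_i) + F(w_j)*)/(1 - ⟨w_i,w_j⟩) h_j, h_i⟩ ≥ 0. -/

import Mathlib

open ContinuousLinearMap

section AuxStmt18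
variable {K : Type*} [NormedAddCommGroup K] [InnerProductSpace ℂ K] [CompleteSpace K]
variable {n : ℕ} (V : Fin n → K →L[ℂ] K)

lemma stmt18_auxTadj (z : Fin n → ℂ) :
    adjoint (∑ i, z i • adjoint (V i)) = ∑ i, (starRingEnd ℂ) (z i) • V i := by
  rw [map_sum]
  exact Finset.sum_congr rfl fun i _ => by
    rw [LinearIsometryEquiv.map_smulₛₗ, adjoint_adjoint]

lemma stmt18_auxMul (hV : ∀ i j : Fin n, adjoint (V i) * V j = if i = j then 1 else 0)
    (z z' : Fin n → ℂ) :
    (∑ i, z i • adjoint (V i)) * adjoint (∑ i, z' i • adjoint (V i))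
      = (∑ l, z l * (starRingEnd ℂ) (z' l)) • (1 : K →L[ℂ] K) := by
  rw [stmt18_auxTadj, Finset.sum_mul]
  have key : ∀ i, (z i • adjoint (V i)) * (∑ j, (starRingEnd ℂ) (z' j) • V j)
      = (z i * (starRingEnd ℂ) (z' i)) • (1 : K →L[ℂ] K) := by
    intro i
    rw [Finset.mul_sum]
    have : ∀ j, (z i • adjoint (V i)) * ((starRingEnd ℂ) (z' j) • V j)
        = (z i * (starRingEnd ℂ) (z' j)) • (if i = j then (1 : K →L[ℂ] K) else 0) := by
      intro j
      rw [smul_mul_assoc, mul_smul_comm, smul_smul, hV]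
    simp only [this]
    simp [Finset.sum_ite_eq]
  simp only [key]
  rw [Finset.sum_smul]

lemma stmt18_auxNorm (hV : ∀ i j : Fin n, adjoint (V i) * V j = if i = j then 1 else 0)
    (z : Fin n → ℂ) (hz : ∑ l, ‖z l‖ ^ 2 < 1) :
    ‖∑ i, z i • adjoint (V i)‖ < 1 := by
  set t := ∑ i, z i • adjoint (V i) with ht
  have h1 : t * adjoint t = (∑ l, z l * (starRingEnd ℂ) (z l)) • (1 : K →L[ℂ] K) :=
    stmt18_auxMul V hV z z
  have h2 : (∑ l, z l * (starRingEnd ℂ) (z l)) = ((∑ l, ‖z l‖ ^ 2 : ℝ) : ℂ) := by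
    push_cast
    exact Finset.sum_congr rfl fun l _ => by
      rw [Complex.mul_conj]
      norm_cast
      rw [Complex.normSq_eq_norm_sq]
  have h3 : ‖t * adjoint t‖ = ‖t‖ * ‖t‖ := by
    rw [← star_eq_adjoint]
    exact CStarRing.norm_self_mul_star
  have h4 : ‖t * adjoint t‖ ≤ ∑ l, ‖z l‖ ^ 2 := by
    rw [h1, h2, norm_smul]
    have hone : ‖(1 : K →L[ℂ] K)‖ ≤ 1 := by rw [ContinuousLinearMap.one_def]; exact norm_id_le
    have hnn : (0:ℝ) ≤ ∑ l, ‖z l‖ ^ 2 := Finset.sum_nonneg fun l _ => sq_nonneg _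
    calc ‖((∑ l, ‖z l‖ ^ 2 : ℝ) : ℂ)‖ * ‖(1 : K →L[ℂ] K)‖
        ≤ ‖((∑ l, ‖z l‖ ^ 2 : ℝ) : ℂ)‖ * 1 :=
          mul_le_mul_of_nonneg_left hone (norm_nonneg _)
      _ = ∑ l, ‖z l‖ ^ 2 := by
          rw [mul_one, Complex.norm_real, Real.norm_of_nonneg hnn]
  nlinarith [norm_nonneg t, h3 ▸ h4]

end AuxStmt18

lemma stmt18_auxRing {R : Type*} [Ring R] [Algebra ℂ R] (t s : R) (c : ℂ)
    (hts : t * s = c • 1) (hut : IsUnit (1 - t)) (hus : IsUnit (1 - s)) :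
    (1 + t) * Ring.inverse (1 - t) + Ring.inverse (1 - s) * (1 + s)
      = (2 - 2 * c) • (Ring.inverse (1 - t) * Ring.inverse (1 - s)) := by
  set a := Ring.inverse (1 - t) with hadef
  set b := Ring.inverse (1 - s) with hbdef
  have ha1 : (1 - t) * a = 1 := Ring.mul_inverse_cancel _ hut
  have ha2 : a * (1 - t) = 1 := Ring.inverse_mul_cancel _ hut
  have hb2 : b * (1 - s) = 1 := Ring.inverse_mul_cancel _ hus
  obtain ⟨u, hu⟩ := hut
  obtain ⟨v, hv⟩ := hus
  have hswt : (1 - t) * (1 + t) = (1 + t) * (1 - t) := by noncomm_ring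
  have hsws : (1 + s) * (1 - s) = (1 - s) * (1 + s) := by noncomm_ring
  have termA : (1 - t) * ((1 + t) * a) * (1 - s) = (1 + t) * (1 - s) := by
    calc (1 - t) * ((1 + t) * a) * (1 - s)
        = ((1 - t) * (1 + t)) * a * (1 - s) := by noncomm_ring
      _ = ((1 + t) * (1 - t)) * a * (1 - s) := by rw [hswt]
      _ = (1 + t) * ((1 - t) * a) * (1 - s) := by noncomm_ring
      _ = (1 + t) * (1 - s) := by rw [ha1, mul_one]
  have termB : (1 - t) * (b * (1 + s)) * (1 - s) = (1 - t) * (1 + s) := by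
    calc (1 - t) * (b * (1 + s)) * (1 - s)
        = (1 - t) * (b * ((1 + s) * (1 - s))) := by noncomm_ring
      _ = (1 - t) * (b * ((1 - s) * (1 + s))) := by rw [hsws]
      _ = (1 - t) * ((b * (1 - s)) * (1 + s)) := by noncomm_ring
      _ = (1 - t) * (1 + s) := by rw [hb2, one_mul]
  have middle : (1 + t) * (1 - s) + (1 - t) * (1 + s) = (2 - 2 * c) • (1 : R) := by
    have h1 : (1 + t) * (1 - s) + (1 - t) * (1 + s) = 2 - 2 * (t * s) := by
      noncomm_ring
      rw [add_comm]
      norm_num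
    have h2 : ∀ x : ℂ, x • (1 : R) = algebraMap ℂ R x :=
      fun x => (Algebra.algebraMap_eq_smul_one x).symm
    have h3 : (algebraMap ℂ R) 2 = 2 := by
      rw [show (2:ℂ) = 1 + 1 by norm_num, map_add, map_one]
      norm_num
    rw [h1, hts, h2, h2, map_sub, map_mul, h3]
  have termR : (1 - t) * ((2 - 2 * c) • (a * b)) * (1 - s) = (2 - 2 * c) • (1 : R) := by
    calc (1 - t) * ((2 - 2 * c) • (a * b)) * (1 - s)
        = (2 - 2 * c) • ((1 - t) * (a * b) * (1 - s)) := by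
          rw [mul_smul_comm, smul_mul_assoc]
      _ = (2 - 2 * c) • (((1 - t) * a) * (b * (1 - s))) := by noncomm_ring
      _ = (2 - 2 * c) • (1 : R) := by rw [ha1, hb2, one_mul]
  have main : (1 - t) * ((1 + t) * a + b * (1 + s)) * (1 - s)
      = (1 - t) * ((2 - 2 * c) • (a * b)) * (1 - s) := by
    rw [mul_add, add_mul, termA, termB, termR, middle]
  have h1 : (u : R) * ((((1 + t) * a + b * (1 + s))) * (v : R))
      = (u : R) * (((2 - 2 * c) • (a * b)) * (v : R)) := by
    rw [hu, hv, ← mul_assoc, ← mul_assoc]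
    exact main
  exact (Units.mul_left_inj v).mp ((Units.mul_right_inj u).mp h1)

/-- Let `V₁, …, V_n` be isometries with pairwise orthogonal ranges on `K`, `W : E → K`
bounded, and `F(z) := W*(I + ∑ zᵢVᵢ*)(I - ∑ zᵢVᵢ*)⁻¹ W` for `z ∈ 𝔹_n`.  Then for any
points `w₁, …, w_m ∈ 𝔹_n` and vectors `h₁, …, h_m ∈ E`, the Pick-type sum
`∑_{i,j} ⟨(F(wᵢ) + F(wⱼ)*)/(1 - ⟨wᵢ, wⱼ⟩) hⱼ, hᵢ⟩` is a nonnegative real number. -/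
theorem stmt18 {E K : Type*}
    [NormedAddCommGroup E] [InnerProductSpace ℂ E] [CompleteSpace E]
    [NormedAddCommGroup K] [InnerProductSpace ℂ K] [CompleteSpace K]
    {n m : ℕ} (V : Fin n → K →L[ℂ] K)
    (hV : ∀ i j : Fin n, adjoint (V i) * V j = if i = j then 1 else 0)
    (W : E →L[ℂ] K)
    (w : Fin m → (Fin n → ℂ)) (hw : ∀ i, ∑ l, ‖w i l‖ ^ 2 < 1)
    (h : Fin m → E)
    (F : (Fin n → ℂ) → (E →L[ℂ] E))
    (hF : ∀ z : Fin n → ℂ, F z =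
      (adjoint W).comp
        (((1 + ∑ i, z i • adjoint (V i)) *
            Ring.inverse (1 - ∑ i, z i • adjoint (V i))).comp W)) :
    0 ≤ (∑ i, ∑ j,
          (1 - ∑ l, w i l * (starRingEnd ℂ) (w j l))⁻¹ *
            (inner ℂ (h i) ((F (w i) + adjoint (F (w j))) (h j)) : ℂ)).re ∧
    (∑ i, ∑ j,
          (1 - ∑ l, w i l * (starRingEnd ℂ) (w j l))⁻¹ *
            (inner ℂ (h i) ((F (w i) + adjoint (F (w j))) (h j)) : ℂ)).im = 0 := by
  classical
  -- notation
  set T : (Fin n → ℂ) → (K →L[ℂ] K) := fun z => ∑ i, z i • adjoint (V i) with hT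
  set g : Fin m → K :=
    fun i => (Ring.inverse (1 - adjoint (T (w i)))) (W (h i)) with hg
  -- norms
  have hnorm : ∀ i, ‖T (w i)‖ < 1 := fun i => stmt18_auxNorm V hV (w i) (hw i)
  have hnorm' : ∀ i, ‖adjoint (T (w i))‖ < 1 := by
    intro i
    rw [← star_eq_adjoint, norm_star]
    exact hnorm i
  have hut : ∀ i, IsUnit (1 - T (w i)) := fun i => isUnit_one_sub_of_norm_lt_one (hnorm i)
  have hus : ∀ i, IsUnit (1 - adjoint (T (w i))) :=
    fun i => isUnit_one_sub_of_norm_lt_one (hnorm' i)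
  -- the scalar ⟨w i, w j⟩ has modulus < 1
  have hc : ∀ i j, 1 - (∑ l, w i l * (starRingEnd ℂ) (w j l)) ≠ 0 := by
    intro i j
    have hcs : ‖∑ l, w i l * (starRingEnd ℂ) (w j l)‖ < 1 := by
      have hnlt : ∀ i, ‖(WithLp.equiv 2 (Fin n → ℂ)).symm (w i)‖ < 1 := by
        intro i
        rw [EuclideanSpace.norm_eq]
        have : ∀ l, ‖(WithLp.equiv 2 (Fin n → ℂ)).symm (w i) l‖ = ‖w i l‖ := fun l => rfl
        simp only [this]
        rw [show (1:ℝ) = Real.sqrt 1 by simp]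
        exact Real.sqrt_lt_sqrt (Finset.sum_nonneg fun l _ => sq_nonneg _) (hw i)
      have hinner : (inner ℂ ((WithLp.equiv 2 (Fin n → ℂ)).symm (w j))
          ((WithLp.equiv 2 (Fin n → ℂ)).symm (w i)) : ℂ)
            = ∑ l, w i l * (starRingEnd ℂ) (w j l) := by
        rw [PiLp.inner_apply]
        exact Finset.sum_congr rfl fun l _ => by
          simp [RCLike.inner_apply, mul_comm]
      calc ‖∑ l, w i l * (starRingEnd ℂ) (w j l)‖
          = ‖(inner ℂ ((WithLp.equiv 2 (Fin n → ℂ)).symm (w j))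
              ((WithLp.equiv 2 (Fin n → ℂ)).symm (w i)) : ℂ)‖ := by rw [hinner]
        _ ≤ ‖(WithLp.equiv 2 (Fin n → ℂ)).symm (w j)‖ *
              ‖(WithLp.equiv 2 (Fin n → ℂ)).symm (w i)‖ := norm_inner_le_norm _ _
        _ < 1 := by
            have h1 := hnlt i
            have h2 := hnlt j
            nlinarith [norm_nonneg ((WithLp.equiv 2 (Fin n → ℂ)).symm (w i)),
              norm_nonneg ((WithLp.equiv 2 (Fin n → ℂ)).symm (w j))]
    intro hzero
    have : (∑ l, w i l * (starRingEnd ℂ) (w j l)) = 1 := by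
      have := sub_eq_zero.mp hzero
      linear_combination -this
    rw [this] at hcs
    simp at hcs
  -- adjoint of F
  have hFadj : ∀ j, adjoint (F (w j)) =
      (adjoint W).comp
        ((Ring.inverse (1 - adjoint (T (w j))) * (1 + adjoint (T (w j)))).comp W) := by
    intro j
    rw [hF (w j)]
    rw [adjoint_comp, adjoint_comp, adjoint_adjoint]
    have hM : adjoint ((1 + T (w j)) * Ring.inverse (1 - T (w j)))
        = Ring.inverse (1 - adjoint (T (w j))) * (1 + adjoint (T (w j))) := by
      rw [← star_eq_adjoint, star_mul, ← Ring.inverse_star, star_sub, star_one, star_add,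
        star_one, star_eq_adjoint]
    rw [hM, comp_assoc]
  -- the key pointwise identity
  have key : ∀ i j, (1 - ∑ l, w i l * (starRingEnd ℂ) (w j l))⁻¹ *
      (inner ℂ (h i) ((F (w i) + adjoint (F (w j))) (h j)) : ℂ)
        = 2 * (inner ℂ (g i) (g j) : ℂ) := by
    intro i j
    set c : ℂ := ∑ l, w i l * (starRingEnd ℂ) (w j l) with hcdef
    have hts : T (w i) * adjoint (T (w j)) = c • 1 := stmt18_auxMul V hV (w i) (w j)
    have ringid := stmt18_auxRing (T (w i)) (adjoint (T (w j))) c hts (hut i) (hus j)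
    have hsum : F (w i) + adjoint (F (w j)) =
        (adjoint W).comp
          (((2 - 2 * c) • (Ring.inverse (1 - T (w i)) *
            Ring.inverse (1 - adjoint (T (w j))))).comp W) := by
      rw [hF (w i), hFadj j, ← comp_add, ← add_comp, ringid]
    rw [hsum]
    have happ : ((adjoint W).comp
        (((2 - 2 * c) • (Ring.inverse (1 - T (w i)) *
          Ring.inverse (1 - adjoint (T (w j))))).comp W)) (h j)
        = (2 - 2 * c) • (adjoint W ((Ring.inverse (1 - T (w i)))
            ((Ring.inverse (1 - adjoint (T (w j)))) (W (h j))))) := by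
      simp only [comp_apply, smul_apply, mul_apply, map_smul]
      rfl
    rw [happ, inner_smul_right]
    have hadja : adjoint (Ring.inverse (1 - T (w i)))
        = Ring.inverse (1 - adjoint (T (w i))) := by
      rw [← star_eq_adjoint, ← Ring.inverse_star, star_sub, star_one, star_eq_adjoint]
    have hinner2 : (inner ℂ (h i) (adjoint W ((Ring.inverse (1 - T (w i)))
        ((Ring.inverse (1 - adjoint (T (w j)))) (W (h j))))) : ℂ)
          = inner ℂ (g i) (g j) := by
      rw [adjoint_inner_right, ← adjoint_inner_left, hadja]
    rw [hinner2]
    have hne : (1:ℂ) - c ≠ 0 := hc i j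
    field_simp
  simp only [key]
  have collect : (∑ i, ∑ j, 2 * (inner ℂ (g i) (g j) : ℂ))
      = 2 * (inner ℂ (∑ i, g i) (∑ i, g i) : ℂ) := by
    rw [sum_inner, Finset.mul_sum]
    refine Finset.sum_congr rfl fun i _ => ?_
    rw [inner_sum, Finset.mul_sum]
  rw [collect]
  have hre : 0 ≤ (inner ℂ (∑ i, g i) (∑ i, g i) : ℂ).re := by
    rw [← RCLike.re_to_complex]
    exact inner_self_nonneg
  have him : (inner ℂ (∑ i, g i) (∑ i, g i) : ℂ).im = 0 := by
    rw [← RCLike.im_to_complex]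
    exact inner_self_im _
  constructor
  · simp only [Complex.mul_re, Complex.re_ofNat, Complex.im_ofNat, zero_mul, sub_zero]
    linarith
  · simp only [Complex.mul_im, Complex.re_ofNat, Complex.im_ofNat, zero_mul, add_zero, him,
      mul_zero]
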